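/- Let f : 𝔻 → closure(𝔻) be holomorphic with f(0) ≠ 0 and let r ∈ (0,1). Then the hyperbolic area satisfies A_h(Ω(rf)) ≥ π(1 − r)r²|f(0)|² / ((1 + r)·((1 + r)² − 4r|f(0)|²)), with equality if and only if f is a constant of modulus 1. -/

import Mathlib

open Complex Set Metric MeasureTheory ENNReal

noncomputable section

/-- `Ω(rf) = {z ∈ 𝔻 : |z| < r|f(z)|}`. -/
def OmegaR (f : ℂ → ℂ) (r : ℝ) : Set ℂ :=
  {z | z ∈ ball (0 : ℂ) 1 ∧ ‖z‖ < r * ‖f z‖}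

/-- The hyperbolic area of a subset of the unit disc. -/
def hypArea (S : Set ℂ) : ℝ≥0∞ :=
  ∫⁻ z in S, ENNReal.ofReal (((1 - ‖z‖ ^ 2) ^ 2)⁻¹)

/-- The hyperbolic length of a subset of the unit disc, via 1-dimensional
Hausdorff measure. -/
def hypLength (E : Set ℂ) : ℝ≥0∞ :=
  ∫⁻ z in E, ENNReal.ofReal ((1 - ‖z‖ ^ 2)⁻¹) ∂(μH[1])



set_option maxHeartbeats 1000000 in
lemma key_ineq_aux (r x ρ : ℝ) (hr0 : 0 < r) (hr1 : r < 1) (hx0 : 0 < x)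
    (hxρ : x < ρ) (hρ1 : ρ < 1) (hxr : x ≤ r) :
    (1-r)*((1+r)-x)^2*(1-ρ^2) < (1+r)*((1+r)-2*x)^2 := by
  have hx1 : x < 1 := lt_trans hxρ hρ1
  have hprod : 0 ≤ (r-x)*((2-x^2)*(r+x) + (1-x)*(4-x^2)) := by
    apply mul_nonneg (by linarith)
    nlinarith
  have hQ : 0 < (2-x^2)*r^2 + (4-4*x-x^2+x^3)*r + (2-4*x+2*x^2-x^3) := by nlinarith
  have hH : (1-r)*((1+r)-x)^2*(1-x^2) ≤ (1+r)*((1+r)-2*x)^2 := by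
    nlinarith [mul_nonneg (sub_nonneg.2 hxr) hQ.le]
  have hpos : 0 < (1-r)*((1+r)-x)^2 := by
    have h2 : 0 < (1+r) - x := by linarith
    have := pow_pos h2 2
    nlinarith
  have hsq : 1-ρ^2 < 1-x^2 := by nlinarith
  calc (1-r)*((1+r)-x)^2*(1-ρ^2) < (1-r)*((1+r)-x)^2*(1-x^2) :=
        mul_lt_mul_of_pos_left hsq hpos
    _ ≤ (1+r)*((1+r)-2*x)^2 := hH

set_option maxHeartbeats 1000000 in
lemma key_ineq (r a ρ : ℝ) (hr0 : 0 < r) (hr1 : r < 1) (ha0 : 0 < a) (ha1 : a < 1)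
    (hρ0 : 0 < ρ) (hρ : ρ ≤ r*a) (hrel : a*ρ^2 + r*a = (1+r)*ρ) :
    (1-r)*r^2*a^2*(1-ρ^2) < ρ^2*(1+r)*((1+r)^2-4*r*a^2) := by
  have key1 : r*a = ρ*((1+r) - a*ρ) := by nlinarith [hrel]
  have key2 : (1+r)^2 - 4*r*a^2 = ((1+r) - 2*(a*ρ))^2 := by
    linear_combination (-4*a) * hrel
  have hx0 : 0 < a*ρ := mul_pos ha0 hρ0
  have hρ1 : ρ < 1 := by nlinarith
  have hxρ : a*ρ < ρ := by nlinarith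
  have hxr : a*ρ ≤ r := by nlinarith
  have hmain := key_ineq_aux r (a*ρ) ρ hr0 hr1 hx0 hxρ hρ1 hxr
  calc (1-r)*r^2*a^2*(1-ρ^2) = ρ^2 * ((1-r)*((1+r)-a*ρ)^2*(1-ρ^2)) := by
        have h3 : (1-r)*r^2*a^2*(1-ρ^2) = (1-r)*(r*a)^2*(1-ρ^2) := by ring
        rw [h3, key1]; ring
    _ < ρ^2 * ((1+r)*((1+r)-2*(a*ρ))^2) := mul_lt_mul_of_pos_left hmain (by positivity)
    _ = ρ^2*(1+r)*((1+r)^2-4*r*a^2) := by rw [key2]; ring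


lemma integral_radial (s : ℝ) (h0 : 0 ≤ s) (h1 : s < 1) :
    ∫ y in Set.Ioo (0:ℝ) s, y * ((1 - y^2)^2)⁻¹ = s^2/(2*(1-s^2)) := by
  rw [← MeasureTheory.integral_Ioc_eq_integral_Ioo, ← intervalIntegral.integral_of_le h0]
  have hFTC : ∀ y ∈ Set.uIcc (0:ℝ) s, HasDerivAt (fun t => (2 - 2*t^2)⁻¹)
      (y * ((1 - y^2)^2)⁻¹) y := by
    intro y hy
    rw [Set.uIcc_of_le h0] at hy
    have h6 : (1:ℝ) - y^2 ≠ 0 := by nlinarith [hy.1, hy.2]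
    have hne : (2 - 2*y^2) ≠ 0 := by
      intro h; apply h6; linarith
    have hd : HasDerivAt (fun t : ℝ => 2 - 2*t^2) (-(2*(2*y))) y := by
      simpa using ((hasDerivAt_pow 2 y).const_mul (2:ℝ)).const_sub 2
    have := hd.inv hne
    refine this.congr_deriv (Eq.symm ?_)
    rw [neg_neg, show ((2:ℝ) - 2*y^2)^2 = 4*(1-y^2)^2 by ring,
      _root_.eq_div_iff (by positivity)]
    field_simp
    ring
  have hint : IntervalIntegrable (fun y => y * ((1 - y^2)^2)⁻¹) volume 0 s := by
    apply ContinuousOn.intervalIntegrable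
    apply ContinuousOn.mul continuousOn_id
    apply ContinuousOn.inv₀ (by fun_prop)
    intro y hy
    rw [Set.uIcc_of_le h0] at hy
    have h6 : (1:ℝ) - y^2 ≠ 0 := by nlinarith [hy.1, hy.2]
    positivity
  rw [intervalIntegral.integral_eq_sub_of_hasDerivAt hFTC hint]
  have hne : (1:ℝ) - s^2 ≠ 0 := by nlinarith
  rw [show (2:ℝ) - 2*s^2 = 2*(1-s^2) by ring, show (2:ℝ) - 2*(0:ℝ)^2 = 2 by ring]
  field_simp
  ring

lemma hypArea_ball (s : ℝ) (h0 : 0 ≤ s) (h1 : s < 1) :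
    hypArea (ball (0:ℂ) s) = ENNReal.ofReal (Real.pi * s^2 / (1 - s^2)) := by
  have hg : ∀ z ∈ closedBall (0:ℂ) s, ((1 - ‖z‖ ^ 2)^2) ≠ 0 := by
    intro z hz
    rw [mem_closedBall, dist_zero_right] at hz
    have h3 : ‖z‖ ≤ s := hz
    have h2 : (0:ℝ) < 1 - ‖z‖ ^ 2 := by nlinarith [norm_nonneg z]
    exact pow_ne_zero 2 h2.ne'
  have hcont : ContinuousOn (fun z : ℂ => ((1 - ‖z‖ ^ 2)^2)⁻¹) (closedBall 0 s) := by
    exact ContinuousOn.inv₀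
      (((continuous_const.sub (continuous_norm.pow 2)).pow 2).continuousOn) hg
  have hInt : IntegrableOn (fun z : ℂ => ((1 - ‖z‖ ^ 2)^2)⁻¹) (ball 0 s) := by
    exact (hcont.integrableOn_compact (isCompact_closedBall _ _)).mono_set ball_subset_closedBall
  have hnn : 0 ≤ᵐ[volume.restrict (ball (0:ℂ) s)]
      (fun z : ℂ => ((1 - ‖z‖ ^ 2)^2)⁻¹) := by
    filter_upwards with z using by positivity
  rw [hypArea, ← MeasureTheory.ofReal_integral_eq_lintegral_ofReal hInt hnn]
  congr 1
  have hind : ∀ z : ℂ, Set.indicator (ball (0:ℂ) s) (fun z : ℂ => ((1 - ‖z‖ ^ 2)^2)⁻¹) z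
      = Set.indicator (Set.Iio s) (fun y : ℝ => ((1 - y ^ 2)^2)⁻¹) ‖z‖ := by
    intro z
    by_cases hz : z ∈ ball (0:ℂ) s
    · rw [Set.indicator_of_mem hz, Set.indicator_of_mem (by simpa [mem_ball, dist_zero_right] using hz)]
    · rw [Set.indicator_of_notMem hz, Set.indicator_of_notMem (by simpa [mem_ball, dist_zero_right] using hz)]
  calc ∫ z in ball (0:ℂ) s, ((1 - ‖z‖ ^ 2)^2)⁻¹
      = ∫ z : ℂ, Set.indicator (ball (0:ℂ) s) (fun z : ℂ => ((1 - ‖z‖ ^ 2)^2)⁻¹) z := by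
        rw [MeasureTheory.integral_indicator measurableSet_ball]
    _ = ∫ z : ℂ, Set.indicator (Set.Iio s) (fun y : ℝ => ((1 - y ^ 2)^2)⁻¹) ‖z‖ := by
        simp_rw [hind]
    _ = Real.pi * s^2 / (1 - s^2) := by
        rw [MeasureTheory.integral_fun_norm_addHaar (volume : Measure ℂ)
          (Set.indicator (Set.Iio s) (fun y : ℝ => ((1 - y ^ 2)^2)⁻¹))]
        simp only [Complex.finrank_real_complex, measureReal_def, Complex.volume_ball]
        have hpt : ∀ y : ℝ, y ^ (2-1) • Set.indicator (Set.Iio s) (fun y : ℝ => ((1 - y ^ 2)^2)⁻¹) y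
            = Set.indicator (Set.Iio s) (fun y : ℝ => y * ((1 - y ^ 2)^2)⁻¹) y := by
          intro y
          by_cases hy : y ∈ Set.Iio s
          · rw [Set.indicator_of_mem hy, Set.indicator_of_mem hy, pow_one, smul_eq_mul]
          · rw [Set.indicator_of_notMem hy, Set.indicator_of_notMem hy, smul_zero]
        simp_rw [hpt]
        rw [MeasureTheory.setIntegral_indicator measurableSet_Iio, Set.Ioi_inter_Iio,
          integral_radial s h0 h1]
        have hne : (1:ℝ) - s^2 ≠ 0 := by nlinarith
        simp only [ENNReal.ofReal_one, one_pow, one_mul, ENNReal.coe_toReal, ← NNReal.coe_real_pi,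
          nsmul_eq_mul, smul_eq_mul, Nat.cast_ofNat]
        field_simp


lemma mobius_sq_identity (w v : ℂ) :
    ‖1 - (starRingEnd ℂ) w * v‖ ^ 2 - ‖w - v‖ ^ 2
      = (1 - ‖w‖ ^ 2) * (1 - ‖v‖ ^ 2) := by
  simp only [Complex.sq_norm, Complex.normSq_apply, Complex.sub_re, Complex.sub_im,
    Complex.one_re, Complex.one_im, Complex.mul_re, Complex.mul_im, Complex.conj_re,
    Complex.conj_im]
  ring

set_option maxHeartbeats 1000000 in
lemma sp_arith (a s t q B : ℝ) (ha0 : 0 ≤ a) (ha : a < 1) (hs0 : 0 ≤ s) (hst : s ≤ t)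
    (ht : t < 1) (hq0 : 0 ≤ q) (hq : q < 1) (hB : 1 - a*s ≤ B)
    (hE : (1 - q^2)*B^2 = (1 - a^2)*(1 - s^2)) : a - t ≤ q*(1 - a*t) := by
  have hBpos : 0 < 1 - a * s := by nlinarith
  have hB2 : (1 - a*s)^2 ≤ B^2 := by nlinarith
  have hq1 : 0 ≤ 1 - q^2 := by nlinarith
  have h4 : (1 - q^2)*(1 - a*s)^2 ≤ (1 - a^2)*(1 - s^2) := by
    calc (1 - q^2)*(1 - a*s)^2 ≤ (1 - q^2)*B^2 := by nlinarith
      _ = (1 - a^2)*(1 - s^2) := hE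
  have hq2 : (a - s)^2 ≤ (q*(1 - a*s))^2 := by nlinarith
  have h5 : a - s ≤ q*(1 - a*s) :=
    le_of_pow_le_pow_left₀ two_ne_zero (mul_nonneg hq0 hBpos.le) hq2
  have h6 : 0 ≤ (t - s) * (1 - q*a) := by
    apply mul_nonneg (by linarith)
    nlinarith
  nlinarith [h5, h6]

lemma schwarz_pick (f : ℂ → ℂ) (hf : DifferentiableOn ℂ f (ball 0 1))
    (hmap : MapsTo f (ball 0 1) (ball 0 1)) (z : ℂ) (hz : z ∈ ball (0:ℂ) 1) :
    ‖f 0‖ - ‖z‖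
      ≤ ‖f z‖ * (1 - ‖f 0‖ * ‖z‖) := by
  set w := f 0 with hw
  have ha : ‖w‖ < 1 := by
    have := hmap (mem_ball_self one_pos)
    rwa [mem_ball, dist_zero_right] at this
  have ha0 : 0 ≤ ‖w‖ := norm_nonneg w
  have hfu : ∀ ζ, ζ ∈ ball (0:ℂ) 1 → ‖f ζ‖ < 1 := by
    intro ζ hζ
    have := hmap hζ
    rwa [mem_ball, dist_zero_right] at this
  have hden : ∀ u : ℂ, ‖u‖ < 1 → 1 - (starRingEnd ℂ) w * u ≠ 0 := by
    intro u hu h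
    have h2 : (starRingEnd ℂ) w * u = 1 := by linear_combination -h
    have := congrArg norm h2
    rw [norm_mul, Complex.norm_conj, norm_one] at this
    nlinarith [norm_nonneg u]
  set g : ℂ → ℂ := fun ζ => (w - f ζ) / (1 - (starRingEnd ℂ) w * f ζ) with hg
  have hgd : DifferentiableOn ℂ g (ball 0 1) := by
    apply DifferentiableOn.div ((differentiableOn_const w).sub hf)
      ((differentiableOn_const 1).sub ((differentiableOn_const _).mul hf))
    intro ζ hζ
    exact hden _ (hfu ζ hζ)
  have habslt : ∀ u : ℂ, ‖u‖ < 1 →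
      ‖w - u‖ < ‖1 - (starRingEnd ℂ) w * u‖ := by
    intro u hu
    have hid := mobius_sq_identity w u
    have hpos : 0 < (1 - ‖w‖ ^ 2) * (1 - ‖u‖ ^ 2) := by
      apply _root_.mul_pos <;> nlinarith [norm_nonneg u]
    have hsq : ‖w - u‖ ^ 2 < ‖1 - (starRingEnd ℂ) w * u‖ ^ 2 := by
      linarith
    exact lt_of_pow_lt_pow_left₀ 2 (norm_nonneg _) hsq
  have hgmap : MapsTo g (ball 0 1) (ball 0 1) := by
    intro ζ hζ
    rw [mem_ball, dist_zero_right]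
    show ‖(w - f ζ) / (1 - (starRingEnd ℂ) w * f ζ)‖ < 1
    rw [norm_div, div_lt_one (by
      have := hden _ (hfu ζ hζ)
      exact (norm_pos_iff.mpr this))]
    exact habslt _ (hfu ζ hζ)
  have hg0 : g 0 = 0 := by
    show (w - f 0) / _ = 0
    rw [← hw, sub_self, zero_div]
  have hzlt : ‖z‖ < 1 := by rwa [mem_ball, dist_zero_right] at hz
  have hSch : ‖g z‖ ≤ ‖z‖ :=
    Complex.norm_le_norm_of_mapsTo_ball hgd (hgmap.mono_right ball_subset_closedBall) hg0 hzlt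
  -- notation
  set u := f z with hu
  set v := g z with hv
  have hu1 : ‖u‖ < 1 := hfu z hz
  have hd : 1 - (starRingEnd ℂ) w * u ≠ 0 := hden u hu1
  have hkey : u * (1 - (starRingEnd ℂ) w * v) = w - v := by
    rw [hv, hg, hu]
    linear_combination div_mul_cancel₀ (w - f z) (show 1 - (starRingEnd ℂ) w * f z ≠ 0 from hd)
  have hvlt : ‖v‖ < 1 := lt_of_le_of_lt hSch hzlt
  -- abs relation
  have habs : ‖u‖ * ‖1 - (starRingEnd ℂ) w * v‖
      = ‖w - v‖ := by rw [← norm_mul, hkey]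
  have hid := mobius_sq_identity w v
  set a := ‖w‖
  set s := ‖v‖
  set t := ‖z‖
  set q := ‖u‖
  have hs0 : 0 ≤ s := norm_nonneg v
  have hq0 : 0 ≤ q := norm_nonneg u
  have ht0 : 0 ≤ t := norm_nonneg z
  have hB : 1 - a * s ≤ ‖1 - (starRingEnd ℂ) w * v‖ := by
    have h1 : ‖(starRingEnd ℂ) w * v‖ = a * s := by
      rw [norm_mul, Complex.norm_conj]
    have h2 := norm_sub_norm_le (1:ℂ) ((starRingEnd ℂ) w * v)
    simp only [norm_one] at h2
    rw [h1] at h2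
    exact h2
  have h3 : (q * ‖1 - (starRingEnd ℂ) w * v‖)^2 = (‖w - v‖)^2 := by
    rw [habs]
  have hE : (1 - q^2) * (‖1 - (starRingEnd ℂ) w * v‖)^2
      = (1 - a^2) * (1 - s^2) := by
    linear_combination hid - h3
  exact sp_arith a s t q (‖1 - (starRingEnd ℂ) w * v‖)
    ha0 ha hs0 hSch hzlt hq0 hu1 hB hE


set_option maxHeartbeats 1000000 in
theorem stmt17 (f : ℂ → ℂ) (r : ℝ) (hr : r ∈ Ioo (0 : ℝ) 1)
    (hf : DifferentiableOn ℂ f (ball (0 : ℂ) 1))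
    (hmap : MapsTo f (ball (0 : ℂ) 1) (closedBall (0 : ℂ) 1))
    (h0 : f 0 ≠ 0) :
    ENNReal.ofReal (Real.pi * (1 - r) * r ^ 2 * ‖f 0‖ ^ 2 /
        ((1 + r) * ((1 + r) ^ 2 - 4 * r * ‖f 0‖ ^ 2)))
      ≤ hypArea (OmegaR f r) ∧
    (hypArea (OmegaR f r) =
        ENNReal.ofReal (Real.pi * (1 - r) * r ^ 2 * ‖f 0‖ ^ 2 /
          ((1 + r) * ((1 + r) ^ 2 - 4 * r * ‖f 0‖ ^ 2))) ↔
      ∃ σ : ℂ, ‖σ‖ = 1 ∧ ∀ z ∈ ball (0 : ℂ) 1, f z = σ) := by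
  obtain ⟨hr0, hr1⟩ := hr
  have ha0 : 0 < ‖f 0‖ := norm_pos_iff.mpr h0
  have ha1 : ‖f 0‖ ≤ 1 := by
    have := hmap (mem_ball_self one_pos)
    rwa [mem_closedBall, dist_zero_right] at this
  rcases eq_or_lt_of_le ha1 with haeq | halt
  · -- |f 0| = 1 : f is constant
    have hmax : IsMaxOn (norm ∘ f) (ball (0:ℂ) 1) 0 := by
      intro z hz
      have := hmap hz
      rw [mem_closedBall, dist_zero_right] at this
      simp only [Function.comp_apply]
      rw [haeq] at *
      exact le_trans (by exact this) (by rw [haeq])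
    have hconst : EqOn f (Function.const ℂ (f 0)) (ball (0:ℂ) 1) :=
      Complex.eqOn_of_isPreconnected_of_isMaxOn_norm (convex_ball 0 1).isPreconnected
        isOpen_ball hf (mem_ball_self one_pos) hmax
    have hOm : OmegaR f r = ball (0:ℂ) r := by
      ext z
      simp only [OmegaR, mem_setOf_eq, mem_ball, dist_zero_right]
      constructor
      · rintro ⟨hz1, hz2⟩
        have : f z = f 0 := hconst (by rwa [mem_ball, dist_zero_right])
        rw [this, haeq, mul_one] at hz2
        exact hz2
      · intro hzr
        have hz1 : ‖z‖ < 1 := lt_trans hzr hr1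
        have : f z = f 0 := hconst (by rwa [mem_ball, dist_zero_right])
        exact ⟨hz1, by rw [this, haeq, mul_one]; exact hzr⟩
    have hre : Real.pi * r^2 / (1 - r^2)
        = Real.pi * (1 - r) * r ^ 2 * ‖f 0‖ ^ 2 /
          ((1 + r) * ((1 + r) ^ 2 - 4 * r * ‖f 0‖ ^ 2)) := by
      rw [haeq]
      have h1 : (1:ℝ) - r^2 ≠ 0 := by nlinarith
      have h2 : ((1:ℝ) + r) * ((1 + r) ^ 2 - 4 * r * 1 ^ 2) ≠ 0 := by
        have he : ((1:ℝ) + r) * ((1 + r) ^ 2 - 4 * r * 1 ^ 2) = (1+r)*(1-r)^2 := by ring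
        rw [he]
        exact ne_of_gt (mul_pos (by linarith) (pow_pos (by linarith) 2))
      rw [div_eq_div_iff h1 h2]
      ring
    have harea : hypArea (OmegaR f r) = ENNReal.ofReal (Real.pi * (1 - r) * r ^ 2 *
        ‖f 0‖ ^ 2 / ((1 + r) * ((1 + r) ^ 2 - 4 * r * ‖f 0‖ ^ 2))) := by
      rw [hOm, hypArea_ball r hr0.le hr1, hre]
    refine ⟨le_of_eq harea.symm, ?_, fun _ => harea⟩
    intro _
    exact ⟨f 0, haeq, fun z hz => hconst hz⟩
  · -- |f 0| < 1
    set a := ‖f 0‖ with hadef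
    have hmap' : MapsTo f (ball (0:ℂ) 1) (ball (0:ℂ) 1) := by
      intro z hz
      have hz1 := hmap hz
      rw [mem_closedBall, dist_zero_right] at hz1
      rw [mem_ball, dist_zero_right]
      rcases lt_or_eq_of_le hz1 with h | h
      · exact h
      · exfalso
        have hmax : IsMaxOn (norm ∘ f) (ball (0:ℂ) 1) z := by
          intro ζ hζ
          have := hmap hζ
          rw [mem_closedBall, dist_zero_right] at this
          simp only [Function.comp_apply]
          rw [h]; exact this
        have hconst : EqOn f (Function.const ℂ (f z)) (ball (0:ℂ) 1) :=
          Complex.eqOn_of_isPreconnected_of_isMaxOn_norm (convex_ball 0 1).isPreconnected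
            isOpen_ball hf hz hmax
        have := hconst (mem_ball_self one_pos)
        simp only [Function.const_apply] at this
        rw [hadef] at halt
        rw [this, h] at halt
        exact lt_irrefl _ halt
    set D := (1+r)^2 - 4*r*a^2 with hDdef
    have ha2 : a^2 < 1 := by nlinarith [mul_pos ha0 ha0]
    have hD : 0 < D := by
      rw [hDdef]
      nlinarith [sq_nonneg (1-r), mul_pos hr0 (sub_pos.2 ha2)]
    have hDle : D < (1+r)^2 := by
      rw [hDdef]
      nlinarith [mul_pos hr0 (mul_pos ha0 ha0)]
    set sq := Real.sqrt D with hsqdef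
    have hsq2 : sq^2 = D := Real.sq_sqrt hD.le
    have hsq0 : 0 ≤ sq := Real.sqrt_nonneg D
    have hsqlt : sq < 1+r := by
      calc sq < Real.sqrt ((1+r)^2) := Real.sqrt_lt_sqrt hD.le hDle
        _ = 1+r := Real.sqrt_sq (by linarith)
    set ρ := ((1+r) - sq)/(2*a) with hρdef
    have hρ0 : 0 < ρ := div_pos (by linarith) (by linarith)
    have hrel : a*ρ^2 + r*a = (1+r)*ρ := by
      rw [hρdef]
      field_simp
      nlinarith [hsq2]
    have hρra : ρ ≤ r*a := by
      have hkey : (1+r) - 2*r*a^2 ≤ sq := by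
        rw [hsqdef]
        rw [show (1+r) - 2*r*a^2 = Real.sqrt (((1+r) - 2*r*a^2)^2) from
          (Real.sqrt_sq (by nlinarith)).symm]
        apply Real.sqrt_le_sqrt
        rw [hDdef]
        have hb0 : 0 < r*a^2 := by positivity
        have hbr : r*a^2 ≤ r := by nlinarith
        nlinarith [mul_le_mul_of_nonneg_left hbr hb0.le]
      rw [hρdef, div_le_iff₀ (by linarith)]
      nlinarith
    have hρ1 : ρ < 1 := lt_of_le_of_lt hρra (by nlinarith)
    have hsub : ball (0:ℂ) ρ ⊆ OmegaR f r := by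
      intro z hz
      rw [mem_ball, dist_zero_right] at hz
      have hz1 : z ∈ ball (0:ℂ) 1 := by
        rw [mem_ball, dist_zero_right]; linarith
      refine ⟨hz1, ?_⟩
      have hsp := schwarz_pick f hf hmap' z hz1
      rw [← hadef] at hsp
      set t := ‖z‖ with htdef
      have ht0 : 0 ≤ t := norm_nonneg z
      have h9 : a*ρ ≤ r := by
        have h9a : a*ρ ≤ a*(r*a) := mul_le_mul_of_nonneg_left hρra ha0.le
        nlinarith [mul_nonneg (mul_nonneg hr0.le (by linarith : (0:ℝ) ≤ 1-a)) (by linarith : (0:ℝ) ≤ 1+a)]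
      have h8 : a*(t+ρ) < 1+r := by
        have := mul_lt_mul_of_pos_left hz ha0
        nlinarith
      have hq : 0 < r*a - (1+r)*t + a*t^2 := by
        have hfac : r*a - (1+r)*t + a*t^2 = (ρ-t)*((1+r) - a*(t+ρ)) + (a*ρ^2 + r*a - (1+r)*ρ) := by
          ring
        rw [hfac, show a*ρ^2 + r*a - (1+r)*ρ = 0 from by linarith [hrel], add_zero]
        exact mul_pos (by linarith) (by linarith)
      have hat : 0 < 1 - a*t := by nlinarith
      have hfz0 : 0 ≤ ‖f z‖ := norm_nonneg (f z)
      have h7 : t*(1-a*t) < (r*‖f z‖)*(1-a*t) := by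
        nlinarith [hsp, hq, mul_le_mul_of_nonneg_left hsp hr0.le]
      exact lt_of_mul_lt_mul_right h7 hat.le
    have hlow : ENNReal.ofReal (Real.pi * ρ^2/(1-ρ^2)) ≤ hypArea (OmegaR f r) := by
      rw [← hypArea_ball ρ hρ0.le hρ1]
      exact lintegral_mono_set hsub
    have hkey := key_ineq r a ρ hr0 hr1 ha0 halt hρ0 hρra hrel
    have hpos1 : (0:ℝ) < (1+r)*D := by positivity
    have hpos2 : (0:ℝ) < 1-ρ^2 := by nlinarith
    have hlt : Real.pi * (1 - r) * r ^ 2 * a ^ 2 / ((1 + r) * D)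
        < Real.pi * ρ^2/(1-ρ^2) := by
      rw [div_lt_div_iff₀ hpos1 hpos2, hDdef]
      nlinarith [mul_lt_mul_of_pos_left hkey Real.pi_pos]
    constructor
    · exact le_trans (ENNReal.ofReal_le_ofReal hlt.le) hlow
    · constructor
      · intro heq
        exfalso
        rw [heq] at hlow
        have hD' : (0:ℝ) < (1+r)^2 - 4*r*a^2 := hD
        have hC0 : (0:ℝ) ≤ Real.pi * (1 - r) * r ^ 2 * a ^ 2 /
            ((1 + r) * ((1 + r) ^ 2 - 4 * r * a ^ 2)) := by
          apply div_nonneg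
          · exact mul_nonneg (mul_nonneg (mul_nonneg Real.pi_pos.le (by linarith))
              (sq_nonneg r)) (sq_nonneg a)
          · nlinarith [hD', hr0]
        have := (ENNReal.ofReal_le_ofReal_iff hC0).1 hlow
        linarith
      · rintro ⟨σ, hσ, hfz⟩
        exfalso
        have : a = 1 := by rw [hadef, hfz 0 (mem_ball_self one_pos), hσ]
        rw [this] at halt
        exact lt_irrefl _ halt
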